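/- Fix an integer k ≥ 0. The family of functions { Q_{kj}^m : 0 ≤ m ≤ k, 0 ≤ j ≤ k }, viewed as elements of the ℂ-vector space of functions ℝ⁴ → ℂ, is linearly independent over ℂ: if complex coefficients c_{m,j} satisfy ∑_{m=0}^{k} ∑_{j=0}^{k} c_{m,j} Q_{kj}^m = 0 as a function on ℝ⁴, then all c_{m,j} = 0. -/

import Mathlib

/-- The polynomial `Q_{kj}^m : ℝ⁴ → ℂ`, the coefficient of `z₁^j z₂^{k-j}` in
`F_k^m(z₁,z₂) = (αz₁+βz₂)^m (-conj(β)z₁+conj(α)z₂)^{k-m}`, where `α = x+iy`, `β = z+iw`: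
the sum over pairs `(a,b)` with `a+b = j`, `a ≤ m`, `b ≤ k-m` of
`C(m,a)·C(k-m,b)·(-1)^b·α^a·β^{m-a}·conj(β)^b·conj(α)^{k-m-b}`. -/
noncomputable def Qkjm (k m j : ℕ) (p : Fin 4 → ℝ) : ℂ :=
  ∑ ab ∈ (Finset.HasAntidiagonal.antidiagonal j).filter (fun ab => ab.1 ≤ m ∧ ab.2 ≤ k - m),
    (Nat.choose m ab.1 : ℂ) * (Nat.choose (k - m) ab.2 : ℂ) * (-1 : ℂ) ^ ab.2 *
      ((p 0 : ℂ) + (p 1 : ℂ) * Complex.I) ^ ab.1 *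
      ((p 2 : ℂ) + (p 3 : ℂ) * Complex.I) ^ (m - ab.1) *
      ((starRingEnd ℂ) ((p 2 : ℂ) + (p 3 : ℂ) * Complex.I)) ^ ab.2 *
      ((starRingEnd ℂ) ((p 0 : ℂ) + (p 1 : ℂ) * Complex.I)) ^ (k - m - ab.2)

open MvPolynomial Finset Complex

/-! ### A complex multivariate polynomial vanishing at all real points is zero -/

noncomputable def reP (P : MvPolynomial (Fin 4) ℂ) : MvPolynomial (Fin 4) ℝ :=
  ∑ d ∈ P.support, monomial d (P.coeff d).re

noncomputable def imP (P : MvPolynomial (Fin 4) ℂ) : MvPolynomial (Fin 4) ℝ :=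
  ∑ d ∈ P.support, monomial d (P.coeff d).im

lemma coeff_reP (P : MvPolynomial (Fin 4) ℂ) (d : Fin 4 →₀ ℕ) :
    coeff d (reP P) = (P.coeff d).re := by
  unfold reP
  rw [coeff_sum]
  simp only [coeff_monomial]
  rw [Finset.sum_ite_eq' P.support d]
  by_cases hd : d ∈ P.support
  · simp [hd]
  · simp [hd, MvPolynomial.notMem_support_iff.mp hd]

lemma coeff_imP (P : MvPolynomial (Fin 4) ℂ) (d : Fin 4 →₀ ℕ) :
    coeff d (imP P) = (P.coeff d).im := by
  unfold imP
  rw [coeff_sum]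
  simp only [coeff_monomial]
  rw [Finset.sum_ite_eq' P.support d]
  by_cases hd : d ∈ P.support
  · simp [hd]
  · simp [hd, MvPolynomial.notMem_support_iff.mp hd]

lemma eval_real (P : MvPolynomial (Fin 4) ℂ) (p : Fin 4 → ℝ) :
    eval (fun i => (p i : ℂ)) P =
      (eval p (reP P) : ℂ) + (eval p (imP P) : ℂ) * Complex.I := by
  rw [eval_eq' (fun i => (p i : ℂ)) P]
  unfold reP imP
  rw [map_sum, map_sum]
  push_cast
  rw [Finset.sum_mul, ← Finset.sum_add_distrib]
  refine Finset.sum_congr rfl fun d _ => ?_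
  simp only [eval_monomial, Finsupp.prod_pow]
  push_cast
  conv_lhs => rw [← Complex.re_add_im (P.coeff d)]
  ring

lemma zero_of_eval_real (P : MvPolynomial (Fin 4) ℂ)
    (h : ∀ p : Fin 4 → ℝ, eval (fun i => (p i : ℂ)) P = 0) : P = 0 := by
  have key : ∀ p : Fin 4 → ℝ, eval p (reP P) = 0 ∧ eval p (imP P) = 0 := by
    intro p
    have := h p
    rw [eval_real] at this
    constructor
    · simpa using congrArg Complex.re this
    · simpa using congrArg Complex.im this
  have hre : reP P = 0 := MvPolynomial.funext fun x => by simp [(key x).1]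
  have him : imP P = 0 := MvPolynomial.funext fun x => by simp [(key x).2]
  ext d
  have h1 := congrArg (coeff d) hre
  have h2 := congrArg (coeff d) him
  rw [coeff_reP] at h1
  rw [coeff_imP] at h2
  simp only [coeff_zero] at h1 h2 ⊢
  exact Complex.ext h1 h2

/-! ### The polynomial version of `Qkjm` -/

noncomputable def expF (k m a b : ℕ) : Fin 4 →₀ ℕ :=
  Finsupp.equivFunOnFinite.symm ![a, m - a, b, k - m - b]

noncomputable def Qpoly (k m j : ℕ) : MvPolynomial (Fin 4) ℂ :=
  ∑ ab ∈ (Finset.HasAntidiagonal.antidiagonal j).filter (fun ab => ab.1 ≤ m ∧ ab.2 ≤ k - m),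
    monomial (expF k m ab.1 ab.2)
      ((Nat.choose m ab.1 : ℂ) * (Nat.choose (k - m) ab.2 : ℂ) * (-1 : ℂ) ^ ab.2)

lemma eval_Qpoly (k m j : ℕ) (v : Fin 4 → ℂ) :
    eval v (Qpoly k m j) =
      ∑ ab ∈ (Finset.HasAntidiagonal.antidiagonal j).filter (fun ab => ab.1 ≤ m ∧ ab.2 ≤ k - m),
        (Nat.choose m ab.1 : ℂ) * (Nat.choose (k - m) ab.2 : ℂ) * (-1 : ℂ) ^ ab.2 *
          v 0 ^ ab.1 * v 1 ^ (m - ab.1) * v 2 ^ ab.2 * v 3 ^ (k - m - ab.2) := by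
  unfold Qpoly
  rw [map_sum]
  refine Finset.sum_congr rfl fun ab _ => ?_
  rw [eval_monomial, Finsupp.prod_pow]
  simp only [expF, Finsupp.coe_equivFunOnFinite_symm, Fin.prod_univ_four]
  simp only [Matrix.cons_val_zero, Matrix.cons_val_one, Matrix.head_cons,
    Matrix.cons_val_two, Matrix.tail_cons, Matrix.cons_val_three]
  ring

lemma Qkjm_eq_eval (k m j : ℕ) (p : Fin 4 → ℝ) :
    Qkjm k m j p =
      eval ![(p 0 : ℂ) + (p 1 : ℂ) * Complex.I, (p 2 : ℂ) + (p 3 : ℂ) * Complex.I,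
        (starRingEnd ℂ) ((p 2 : ℂ) + (p 3 : ℂ) * Complex.I),
        (starRingEnd ℂ) ((p 0 : ℂ) + (p 1 : ℂ) * Complex.I)] (Qpoly k m j) := by
  rw [eval_Qpoly, Qkjm]
  refine Finset.sum_congr rfl fun ab _ => ?_
  simp only [Matrix.cons_val_zero, Matrix.cons_val_one, Matrix.head_cons,
    Matrix.cons_val_two, Matrix.tail_cons, Matrix.cons_val_three]

/-! ### The substitution `α = x + iy`, `β = z + iw` and its inverse -/

lemma eval_bind₁' {σ τ : Type*} (f : τ → ℂ) (g : σ → MvPolynomial τ ℂ) (φ : MvPolynomial σ ℂ) :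
    eval f (bind₁ g φ) = eval (fun i => eval f (g i)) φ :=
  eval₂Hom_bind₁ _ _ _ _

noncomputable def subv : Fin 4 → MvPolynomial (Fin 4) ℂ :=
  ![X 0 + C Complex.I * X 1, X 2 + C Complex.I * X 3,
    X 2 - C Complex.I * X 3, X 0 - C Complex.I * X 1]

noncomputable def invv : Fin 4 → MvPolynomial (Fin 4) ℂ :=
  ![C (1/2) * (X 0 + X 3), C (-Complex.I/2) * (X 0 - X 3),
    C (1/2) * (X 1 + X 2), C (-Complex.I/2) * (X 1 - X 2)]

lemma bind_inv_sub (i : Fin 4) : bind₁ invv (subv i) = X i := by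
  have hI : Complex.I * (-Complex.I/2) = 1/2 := by
    field_simp
    simp
  have h1 : (C Complex.I : MvPolynomial (Fin 4) ℂ) * C (-Complex.I/2) = C (1/2) := by
    rw [← C_mul, hI]
  have h2 : (2 : MvPolynomial (Fin 4) ℂ) * C (1/2) = 1 := by
    rw [← map_ofNat C 2, ← C_mul]
    norm_num
  fin_cases i
  · show bind₁ invv (subv 0) = X 0
    simp only [subv, invv, Matrix.cons_val_zero, Matrix.cons_val_one, Matrix.head_cons,
      Matrix.cons_val_two, Matrix.tail_cons, Matrix.cons_val_three, map_add, map_sub, map_mul,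
      bind₁_X_right, bind₁_C_right]
    linear_combination (X (0:Fin 4) : MvPolynomial (Fin 4) ℂ) * h2 +
      ((X 0 - X 3 : MvPolynomial (Fin 4) ℂ)) * h1
  · show bind₁ invv (subv 1) = X 1
    simp only [subv, invv, Matrix.cons_val_zero, Matrix.cons_val_one, Matrix.head_cons,
      Matrix.cons_val_two, Matrix.tail_cons, Matrix.cons_val_three, map_add, map_sub, map_mul,
      bind₁_X_right, bind₁_C_right]
    linear_combination (X (1:Fin 4) : MvPolynomial (Fin 4) ℂ) * h2 +
      ((X 1 - X 2 : MvPolynomial (Fin 4) ℂ)) * h1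
  · show bind₁ invv (subv 2) = X 2
    simp only [subv, invv, Matrix.cons_val_zero, Matrix.cons_val_one, Matrix.head_cons,
      Matrix.cons_val_two, Matrix.tail_cons, Matrix.cons_val_three, map_add, map_sub, map_mul,
      bind₁_X_right, bind₁_C_right]
    linear_combination (X (2:Fin 4) : MvPolynomial (Fin 4) ℂ) * h2 -
      ((X 1 - X 2 : MvPolynomial (Fin 4) ℂ)) * h1
  · show bind₁ invv (subv 3) = X 3
    simp only [subv, invv, Matrix.cons_val_zero, Matrix.cons_val_one, Matrix.head_cons,
      Matrix.cons_val_two, Matrix.tail_cons, Matrix.cons_val_three, map_add, map_sub, map_mul,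
      bind₁_X_right, bind₁_C_right]
    linear_combination (X (3:Fin 4) : MvPolynomial (Fin 4) ℂ) * h2 -
      ((X 0 - X 3 : MvPolynomial (Fin 4) ℂ)) * h1

/-! ### Coefficient extraction -/

lemma expF_inj {k m m' a b a' b' : ℕ} (ha : a ≤ m) (ha' : a' ≤ m')
    (h : expF k m' a' b' = expF k m a b) : a' = a ∧ b' = b ∧ m' = m := by
  have hf : (![a', m' - a', b', k - m' - b'] : Fin 4 → ℕ) = ![a, m - a, b, k - m - b] :=
    Finsupp.equivFunOnFinite.symm.injective h
  have h0 := congrFun hf 0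
  have h1 := congrFun hf 1
  have h2 := congrFun hf 2
  simp only [Matrix.cons_val_zero, Matrix.cons_val_one, Matrix.head_cons,
    Matrix.cons_val_two, Matrix.tail_cons] at h0 h1 h2
  refine ⟨h0, h2, ?_⟩
  omega

lemma coeff_Qpoly (k m j m' j' a₀ b₀ : ℕ)
    (ha : a₀ ≤ m) (hb : b₀ ≤ k - m) (hj : a₀ + b₀ = j) :
    coeff (expF k m a₀ b₀) (Qpoly k m' j') =
      if m' = m ∧ j' = j then
        (Nat.choose m a₀ : ℂ) * (Nat.choose (k - m) b₀ : ℂ) * (-1 : ℂ) ^ b₀ else 0 := by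
  unfold Qpoly
  rw [coeff_sum]
  simp only [coeff_monomial]
  by_cases hc : m' = m ∧ j' = j
  · obtain ⟨rfl, rfl⟩ := hc
    rw [if_pos ⟨rfl, rfl⟩]
    rw [Finset.sum_eq_single_of_mem (a₀, b₀)]
    · rw [if_pos rfl]
    · simp only [Finset.mem_filter, Finset.HasAntidiagonal.mem_antidiagonal]
      exact ⟨hj, ha, hb⟩
    · rintro ⟨a, b⟩ hmem hne
      rw [if_neg]
      intro he
      obtain ⟨h1, h2, -⟩ := expF_inj ha (by
        simp only [Finset.mem_filter, Finset.HasAntidiagonal.mem_antidiagonal] at hmem; exact hmem.2.1) he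
      exact hne (Prod.ext h1 h2)
  · rw [if_neg hc]
    apply Finset.sum_eq_zero
    rintro ⟨a, b⟩ hmem
    simp only [Finset.mem_filter, Finset.HasAntidiagonal.mem_antidiagonal] at hmem
    rw [if_neg]
    intro he
    obtain ⟨h1, h2, h3⟩ := expF_inj ha hmem.2.1 he
    exact hc ⟨h3, by omega⟩

/-- for fixed `k`, the family `{ Q_{kj}^m : 0 ≤ m ≤ k, 0 ≤ j ≤ k }` of functions
`ℝ⁴ → ℂ` is linearly independent over `ℂ`. -/
theorem stmt_12 (k : ℕ) (c : ℕ → ℕ → ℂ)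
    (h : ∀ p : Fin 4 → ℝ,
      ∑ m ∈ Finset.range (k + 1), ∑ j ∈ Finset.range (k + 1), c m j * Qkjm k m j p = 0) :
    ∀ m ≤ k, ∀ j ≤ k, c m j = 0 := by
  set G : MvPolynomial (Fin 4) ℂ :=
    ∑ m ∈ Finset.range (k + 1), ∑ j ∈ Finset.range (k + 1), C (c m j) * Qpoly k m j with hGdef
  have hGeval : ∀ p : Fin 4 → ℝ,
      eval ![(p 0 : ℂ) + (p 1 : ℂ) * Complex.I, (p 2 : ℂ) + (p 3 : ℂ) * Complex.I,
        (starRingEnd ℂ) ((p 2 : ℂ) + (p 3 : ℂ) * Complex.I),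
        (starRingEnd ℂ) ((p 0 : ℂ) + (p 1 : ℂ) * Complex.I)] G = 0 := by
    intro p
    rw [hGdef, map_sum, ← h p]
    refine Finset.sum_congr rfl fun m _ => ?_
    rw [map_sum]
    refine Finset.sum_congr rfl fun j _ => ?_
    rw [map_mul, eval_C, Qkjm_eq_eval]
  have hHreal : ∀ p : Fin 4 → ℝ, eval (fun i => (p i : ℂ)) (bind₁ subv G) = 0 := by
    intro p
    rw [eval_bind₁']
    have hv : (fun i => eval (fun i => (p i : ℂ)) (subv i)) =
        ![(p 0 : ℂ) + (p 1 : ℂ) * Complex.I, (p 2 : ℂ) + (p 3 : ℂ) * Complex.I,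
          (starRingEnd ℂ) ((p 2 : ℂ) + (p 3 : ℂ) * Complex.I),
          (starRingEnd ℂ) ((p 0 : ℂ) + (p 1 : ℂ) * Complex.I)] := by
      funext i
      fin_cases i
      · show eval (fun i => (p i : ℂ)) (subv 0) = (p 0 : ℂ) + (p 1 : ℂ) * Complex.I
        simp [subv, mul_comm]
      · show eval (fun i => (p i : ℂ)) (subv 1) = (p 2 : ℂ) + (p 3 : ℂ) * Complex.I
        simp [subv, mul_comm]
      · show eval (fun i => (p i : ℂ)) (subv 2) =
          (starRingEnd ℂ) ((p 2 : ℂ) + (p 3 : ℂ) * Complex.I)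
        simp only [subv, Matrix.cons_val_two, Matrix.tail_cons, Matrix.head_cons, map_sub,
          map_add, map_mul, eval_X, eval_C, Complex.conj_ofReal, Complex.conj_I]
        ring
      · show eval (fun i => (p i : ℂ)) (subv 3) =
          (starRingEnd ℂ) ((p 0 : ℂ) + (p 1 : ℂ) * Complex.I)
        simp only [subv, Matrix.cons_val_three, Matrix.tail_cons, Matrix.head_cons, map_sub,
          map_add, map_mul, eval_X, eval_C, Complex.conj_ofReal, Complex.conj_I]
        ring
    rw [hv]
    exact hGeval p
  have hH0 : bind₁ subv G = 0 := zero_of_eval_real _ hHreal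
  have hG0 : G = 0 := by
    have : G = bind₁ invv (bind₁ subv G) := by
      rw [bind₁_bind₁]
      have : (fun i => bind₁ invv (subv i)) = X := funext bind_inv_sub
      rw [this, bind₁_X_left]
      rfl
    rw [this, hH0, map_zero]
  intro m hm j hj
  set b₀ := min j (k - m) with hb₀
  set a₀ := j - b₀ with ha₀
  have ha : a₀ ≤ m := by omega
  have hb : b₀ ≤ k - m := min_le_right _ _
  have hjsum : a₀ + b₀ = j := by omega
  have hc : coeff (expF k m a₀ b₀) G =
      c m j * ((Nat.choose m a₀ : ℂ) * (Nat.choose (k - m) b₀ : ℂ) * (-1 : ℂ) ^ b₀) := by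
    rw [hGdef, coeff_sum]
    rw [Finset.sum_eq_single_of_mem m (Finset.mem_range.mpr (by omega))]
    · rw [coeff_sum, Finset.sum_eq_single_of_mem j (Finset.mem_range.mpr (by omega))]
      · rw [coeff_C_mul, coeff_Qpoly k m j m j a₀ b₀ ha hb hjsum, if_pos ⟨rfl, rfl⟩]
      · intro j' _ hne
        rw [coeff_C_mul, coeff_Qpoly k m j m j' a₀ b₀ ha hb hjsum, if_neg (by tauto), mul_zero]
    · intro m' _ hne
      rw [coeff_sum]
      apply Finset.sum_eq_zero
      intro j' _
      rw [coeff_C_mul, coeff_Qpoly k m j m' j' a₀ b₀ ha hb hjsum, if_neg (by tauto), mul_zero]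
  rw [hG0, coeff_zero] at hc
  have hK : ((Nat.choose m a₀ : ℂ) * (Nat.choose (k - m) b₀ : ℂ) * (-1 : ℂ) ^ b₀) ≠ 0 := by
    have h1 : (Nat.choose m a₀ : ℂ) ≠ 0 := Nat.cast_ne_zero.mpr (Nat.choose_pos ha).ne'
    have h2 : (Nat.choose (k - m) b₀ : ℂ) ≠ 0 := Nat.cast_ne_zero.mpr (Nat.choose_pos hb).ne'
    have h3 : ((-1 : ℂ)) ^ b₀ ≠ 0 := pow_ne_zero _ (by norm_num)
    exact mul_ne_zero (mul_ne_zero h1 h2) h3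
  exact (mul_eq_zero.mp hc.symm).resolve_right hK
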